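/- Let N ≥ 1 and let β ∈ ℕ^N be a nonzero multi-index. Then ∑_{0 ≤ γ ≤ β} (β!/(γ!·(β−γ)!))·γ^{γ̃}·(β−γ)^{(β−γ)̃} ≤ 4^N·β^{β̃}, where the sum ranges over all multi-indices γ with 0 ≤ γ_i ≤ β_i for each i, α! = ∏_i α_i!, α^δ = ∏_i α_i^{δ_i} (with the convention 0⁰ = 1), and for a multi-index α, α̃ denotes the multi-index with entries max{α_i − 1, 0}. -/

import Mathlib

open scoped BigOperators
open Finset


lemma alt_sum_choose_pow : ∀ (n j : ℕ), j < n →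
    ∑ k ∈ range (n+1), (-1:ℝ)^k * (n.choose k) * (k:ℝ)^j = 0 := by
  intro n
  induction n with
  | zero => intro j hj; exact absurd hj (Nat.not_lt_zero j)
  | succ n ih =>
    intro j hj
    rcases Nat.eq_zero_or_pos j with rfl | hjpos
    · simp only [pow_zero, mul_one]
      have := Int.alternating_sum_range_choose_of_ne (Nat.succ_ne_zero n)
      have h2 : ((∑ i ∈ range (n + 1 + 1), (-1:ℤ) ^ i * ((n+1).choose i) : ℤ) : ℝ) = 0 := by
        rw [this]; norm_num
      push_cast at h2
      convert h2 using 2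
    · have hj' : j ≤ n := Nat.lt_succ_iff.mp hj
      have hjne : j ≠ 0 := hjpos.ne'
      have hsplit : ∑ k ∈ range (n+2), (-1:ℝ)^k * ((n+1).choose k) * (k:ℝ)^j
          = ∑ k ∈ range (n+2), ((-1:ℝ)^k * (n.choose k) * (k:ℝ)^j
            + (-1:ℝ)^k * (n.choose (k-1)) * (k:ℝ)^j) := by
        refine Finset.sum_congr rfl ?_
        intro k _
        match k with
        | 0 => simp [zero_pow hjne]
        | (m+1) =>
          rw [Nat.choose_succ_succ, Nat.add_sub_cancel]
          push_cast
          ring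
      rw [hsplit, Finset.sum_add_distrib]
      have h1 : ∑ k ∈ range (n+2), (-1:ℝ)^k * (n.choose k) * (k:ℝ)^j
          = ∑ k ∈ range (n+1), (-1:ℝ)^k * (n.choose k) * (k:ℝ)^j := by
        rw [Finset.sum_range_succ, Nat.choose_succ_self]
        simp
      have h2 : ∑ k ∈ range (n+2), (-1:ℝ)^k * (n.choose (k-1)) * (k:ℝ)^j
          = ∑ i ∈ range (n+1), (-1:ℝ)^(i+1) * (n.choose i) * ((i:ℝ)+1)^j := by
        rw [Finset.sum_range_succ']
        simp [zero_pow hjne]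
      rw [h1, h2, ← Finset.sum_add_distrib]
      have key : ∀ i ∈ range (n+1),
          (-1:ℝ)^i * (n.choose i) * (i:ℝ)^j + (-1:ℝ)^(i+1) * (n.choose i) * ((i:ℝ)+1)^j
          = ∑ t ∈ range j, -((j.choose t : ℝ) * ((-1:ℝ)^i * (n.choose i) * (i:ℝ)^t)) := by
        intro i _
        have hexp : ((i:ℝ)+1)^j = (i:ℝ)^j + ∑ t ∈ range j, (i:ℝ)^t * (j.choose t) := by
          rw [add_pow]
          simp only [one_pow, mul_one]
          rw [Finset.sum_range_succ, Nat.choose_self]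
          push_cast
          rw [mul_one, add_comm]
        have hS : ∑ t ∈ range j, -((j.choose t:ℝ) * ((-1:ℝ)^i * (n.choose i) * (i:ℝ)^t))
            = -((-1:ℝ)^i * (n.choose i) * ∑ t ∈ range j, (i:ℝ)^t * (j.choose t)) := by
          rw [Finset.mul_sum, ← Finset.sum_neg_distrib]
          exact Finset.sum_congr rfl (fun t _ => by ring)
        rw [hexp, hS]
        ring
      rw [Finset.sum_congr rfl key, Finset.sum_comm]
      refine Finset.sum_eq_zero ?_
      intro t ht
      have ht' : t < n := lt_of_lt_of_le (mem_range.mp ht) hj'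
      have : ∑ x ∈ range (n+1), -((j.choose t : ℝ) * ((-1:ℝ)^x * (n.choose x) * (x:ℝ)^t))
          = -((j.choose t : ℝ) * ∑ x ∈ range (n+1), ((-1:ℝ)^x * (n.choose x) * (x:ℝ)^t)) := by
        rw [Finset.mul_sum, ← Finset.sum_neg_distrib]
      rw [this, ih t ht', mul_zero, neg_zero]


lemma alt_sum_choose_shift (n : ℕ) (hn : 1 ≤ n) (x : ℝ) :
    ∑ k ∈ range (n+1), (-1:ℝ)^k * (n.choose k) * (x + k)^(n-1) = 0 := by
  have hexp : ∀ k : ℕ, (x + (k:ℝ))^(n-1)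
      = ∑ t ∈ range n, x^t * (k:ℝ)^(n-1-t) * ((n-1).choose t) := by
    intro k
    rw [add_pow, Nat.sub_add_cancel hn]
  calc ∑ k ∈ range (n+1), (-1:ℝ)^k * (n.choose k) * (x + k)^(n-1)
      = ∑ k ∈ range (n+1), ∑ t ∈ range n,
          x^t * ((n-1).choose t) * ((-1:ℝ)^k * (n.choose k) * (k:ℝ)^(n-1-t)) := by
        refine Finset.sum_congr rfl fun k _ => ?_
        rw [hexp k, Finset.mul_sum]
        exact Finset.sum_congr rfl fun t _ => by ring
    _ = ∑ t ∈ range n, x^t * ((n-1).choose t) *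
          ∑ k ∈ range (n+1), ((-1:ℝ)^k * (n.choose k) * (k:ℝ)^(n-1-t)) := by
        rw [Finset.sum_comm]
        exact Finset.sum_congr rfl fun t _ => by rw [Finset.mul_sum]
    _ = 0 := by
        refine Finset.sum_eq_zero fun t ht => ?_
        rw [alt_sum_choose_pow n (n-1-t) (by omega), mul_zero]


lemma abel_identity : ∀ (n : ℕ) (x y : ℝ),
    (y + n)^n + ∑ k ∈ Icc 1 n, ((n.choose k : ℝ)) * x * (x+k)^(k-1) * (y + n - k)^(n-k)
    = (x + y + n)^n := by
  intro n
  induction n with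
  | zero => intro x y; simp
  | succ n ih =>
    intro x
    set m := n + 1 with hm
    -- define F and G
    set F : ℝ → ℝ := fun y => (y + m)^m +
      ∑ k ∈ Icc 1 m, ((m.choose k : ℝ)) * x * (x+k)^(k-1) * (y + m - k)^(m-k) with hF
    set G : ℝ → ℝ := fun y => (x + y + m)^m with hG
    suffices h : ∀ y, F y = G y by intro y; exact h y
    -- derivatives
    have hFd : ∀ y : ℝ, HasDerivAt F
        ((m:ℝ) * (y + m)^(m-1) +
          ∑ k ∈ Icc 1 m, ((m.choose k : ℝ)) * x * (x+k)^(k-1) *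
            (((m-k : ℕ):ℝ) * (y + m - k)^(m-k-1))) y := by
      intro y
      have h1 : HasDerivAt (fun y : ℝ => (y + (m:ℝ))^m) ((m:ℝ) * (y + m)^(m-1)) y := by
        have := ((hasDerivAt_id y).add_const (m:ℝ)).fun_pow m
        simpa using this
      have h2 : ∀ k ∈ Icc 1 m, HasDerivAt
          (fun y : ℝ => ((m.choose k : ℝ)) * x * (x+k)^(k-1) * (y + m - k)^(m-k))
          (((m.choose k : ℝ)) * x * (x+k)^(k-1) * (((m-k:ℕ):ℝ) * (y + m - k)^(m-k-1))) y := by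
        intro k _
        have hb : HasDerivAt (fun y : ℝ => (y + (m:ℝ) - (k:ℝ))^(m-k))
            (((m-k:ℕ):ℝ) * (y + m - k)^(m-k-1)) y := by
          have := (((hasDerivAt_id y).add_const (m:ℝ)).sub_const (k:ℝ)).fun_pow (m-k)
          simpa using this
        exact hb.const_mul _
      exact h1.add (HasDerivAt.fun_sum h2)
    have hGd : ∀ y : ℝ, HasDerivAt G ((m:ℝ) * (x + y + m)^(m-1)) y := by
      intro y
      have := (((hasDerivAt_id y).const_add x).add_const (m:ℝ)).fun_pow m
      simpa using this
    -- the two derivatives agree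
    have hderiv_eq : ∀ y : ℝ,
        ((m:ℝ) * (y + m)^(m-1) +
          ∑ k ∈ Icc 1 m, ((m.choose k : ℝ)) * x * (x+k)^(k-1) *
            (((m-k : ℕ):ℝ) * (y + m - k)^(m-k-1)))
        = (m:ℝ) * (x + y + m)^(m-1) := by
      intro y
      have hsum : ∑ k ∈ Icc 1 m, ((m.choose k : ℝ)) * x * (x+k)^(k-1) *
            (((m-k : ℕ):ℝ) * (y + m - k)^(m-k-1))
          = (m:ℝ) * ∑ k ∈ Icc 1 n, ((n.choose k : ℝ)) * x * (x+k)^(k-1) *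
            ((y+1) + n - k)^(n-k) := by
        rw [hm]
        rw [Finset.sum_Icc_succ_top (by omega : 1 ≤ n + 1)]
        have hlast : ((n + 1).choose (n+1) : ℝ) * x * (x + ((n+1:ℕ):ℝ)) ^ (n + 1 - 1) *
            (((n + 1 - (n + 1) : ℕ):ℝ) * (y + ((n+1:ℕ):ℝ) - ((n+1:ℕ):ℝ)) ^ (n + 1 - (n + 1) - 1)) = 0 := by
          simp
        rw [hlast, add_zero, Finset.mul_sum]
        refine Finset.sum_congr rfl fun k hk => ?_
        rw [Finset.mem_Icc] at hk
        have hck : ((n+1).choose k : ℝ) * ((n+1-k:ℕ):ℝ) = (((n+1):ℕ):ℝ) * (n.choose k : ℝ) := by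
          have h2 : (n+1).choose k * (n+1-k) = (n+1) * n.choose k :=
            (Nat.choose_mul_succ_eq n k).symm.trans (Nat.mul_comm _ _)
          exact_mod_cast congrArg (Nat.cast : ℕ → ℝ) h2
        have hexp : (n+1) - k - 1 = n - k := by omega
        have hcast : (y + ((n+1:ℕ):ℝ) - k) = ((y+1) + n - k) := by push_cast; ring
        rw [hexp, hcast]
        calc ((n+1).choose k : ℝ) * x * (x+k)^(k-1) * (((n+1-k:ℕ):ℝ) * ((y+1) + n - k)^(n-k))
            = (((n+1).choose k : ℝ) * ((n+1-k:ℕ):ℝ)) * (x * (x+k)^(k-1) * ((y+1) + n - k)^(n-k)) := by ring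
          _ = (((n+1):ℕ):ℝ) * ((n.choose k : ℝ) * x * (x+k)^(k-1) * ((y+1) + n - k)^(n-k)) := by
              rw [hck]; ring
      rw [hsum]
      have hy1 : (y + (m:ℝ))^(m-1) = ((y+1) + (n:ℝ))^n := by
        rw [hm]; push_cast; ring_nf
      rw [hy1, ← mul_add]
      have := ih x (y+1)
      rw [this]
      have : (x + (y+1) + (n:ℝ))^n = (x + y + (m:ℝ))^(m-1) := by
        rw [hm]; push_cast; ring_nf
      rw [this]
  -- constancy
    have hH : ∀ y : ℝ, HasDerivAt (fun y => F y - G y) 0 y := by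
      intro y
      have := (hFd y).sub (hGd y)
      rwa [hderiv_eq y, sub_self] at this
    have hconst : ∀ y z : ℝ, F y - G y = F z - G z := by
      intro y z
      exact is_const_of_deriv_eq_zero (fun w => (hH w).differentiableAt)
        (fun w => (hH w).deriv) y z
    -- evaluate at y₀
    set y₀ : ℝ := -x - m with hy₀
    have hG0 : G y₀ = 0 := by
      simp only [hG, hy₀]
      rw [show x + (-x - (m:ℝ)) + m = 0 by ring]
      exact zero_pow (by omega)
    have hF0 : F y₀ = 0 := by
      have key := alt_sum_choose_shift m (by omega) x
      have hsplit : range (m+1) = insert 0 (Icc 1 m) := by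
        ext k; simp only [Finset.mem_range, Finset.mem_insert, Finset.mem_Icc]; omega
      rw [hsplit, Finset.sum_insert (by simp)] at key
      simp only [hF, hy₀]
      have hterm : ∀ k ∈ Icc 1 m,
          ((m.choose k : ℝ)) * x * (x+k)^(k-1) * ((-x - m) + m - k)^(m-k)
          = (x * (-1:ℝ)^m) * ((-1:ℝ)^k * (m.choose k) * (x + k)^(m-1)) := by
        intro k hk
        rw [Finset.mem_Icc] at hk
        have harg : ((-x - (m:ℝ)) + m - k) = -(x + k) := by ring
        rw [harg, neg_pow]
        have hsgn : (-1:ℝ)^(m-k) = (-1)^m * (-1)^k := by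
          have h1 : (-1:ℝ)^(m-k) * (-1)^k = (-1)^m := by
            rw [← pow_add]; congr 1; omega
          have h2 : (-1:ℝ)^k * (-1)^k = 1 := by
            rw [← mul_pow]; norm_num
          calc (-1:ℝ)^(m-k) = (-1:ℝ)^(m-k) * ((-1:ℝ)^k * (-1)^k) := by rw [h2, mul_one]
            _ = ((-1:ℝ)^(m-k) * (-1)^k) * (-1)^k := by ring
            _ = (-1)^m * (-1)^k := by rw [h1]
        have hpow : (x+(k:ℝ))^(k-1) * (x+k)^(m-k) = (x+k)^(m-1) := by
          rw [← pow_add]; congr 1; omega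
        calc ((m.choose k : ℝ)) * x * (x+k)^(k-1) * ((-1)^(m-k) * (x+k)^(m-k))
            = ((-1:ℝ)^(m-k)) * (((m.choose k : ℝ)) * x) * ((x+k)^(k-1) * (x+k)^(m-k)) := by ring
          _ = ((-1:ℝ)^m * (-1)^k) * (((m.choose k : ℝ)) * x) * ((x+k)^(m-1)) := by
              rw [hsgn, hpow]
          _ = (x * (-1:ℝ)^m) * ((-1:ℝ)^k * (m.choose k) * (x + k)^(m-1)) := by ring
      rw [Finset.sum_congr rfl hterm, ← Finset.mul_sum]
      have hhead : ((-x - (m:ℝ)) + m)^m = (x * (-1:ℝ)^m) * ((-1:ℝ)^0 * (m.choose 0) * (x + (0:ℕ))^(m-1)) := by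
        have hx : x ^ m = x * x^(m-1) := by rw [hm, Nat.add_sub_cancel, pow_succ']
        rw [show ((-x - (m:ℝ)) + m) = -x by ring, neg_pow, hx]
        simp only [pow_zero, Nat.choose_zero_right, Nat.cast_one, Nat.cast_zero, add_zero, one_mul, mul_one]
        ring
      rw [hhead, ← mul_add]
      have : ((-1:ℝ)^0 * (m.choose 0) * (x + (0:ℕ))^(m-1)) +
          ∑ k ∈ Icc 1 m, ((-1:ℝ)^k * (m.choose k) * (x + k)^(m-1)) = 0 := by
        exact_mod_cast key
      rw [this, mul_zero]
    intro y
    have := hconst y y₀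
    rw [hF0, hG0, sub_zero] at this
    linarith [this]


lemma sym_abel (m : ℕ) (x y : ℝ) :
    ∑ k ∈ Icc 1 m, ((m+1).choose k : ℝ) * x * (x+k)^(k-1) * (y * (y + ((m+1:ℕ):ℝ) - k)^(m+1-k-1))
    = (x+y)*(x+y+((m+1:ℕ):ℝ))^m - y*(y+((m+1:ℕ):ℝ))^m - x*(x+((m+1:ℕ):ℝ))^m := by
  set c : ℝ := ((m+1:ℕ):ℝ) with hc
  have hterm : ∀ k ∈ Icc 1 m,
      ((m+1).choose k : ℝ) * x * (x+k)^(k-1) * (y * (y + c - k)^(m+1-k-1))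
      = ((m+1).choose k : ℝ) * x * (x+k)^(k-1) * (y + c - k)^(m+1-k)
        - ((m+1).choose k : ℝ) * ((m+1-k:ℕ):ℝ) * (x * (x+k)^(k-1) * (y + c - k)^(m-k)) := by
    intro k hk
    rw [Finset.mem_Icc] at hk
    have he1 : m + 1 - k - 1 = m - k := by omega
    have he2 : m + 1 - k = (m - k) + 1 := by omega
    have hcast : ((m+1-k:ℕ):ℝ) = c - k := by
      rw [hc]; push_cast [Nat.cast_sub (by omega : k ≤ m+1)]; ring
    rw [he1, hcast, he2, pow_succ]
    ring
  rw [Finset.sum_congr rfl hterm, Finset.sum_sub_distrib]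
  -- first sum via abel at (m+1)
  have habel1 := abel_identity (m+1) x y
  rw [Finset.sum_Icc_succ_top (by omega : 1 ≤ m + 1)] at habel1
  have hlast : ((m+1).choose (m+1) : ℝ) * x * (x + ((m+1:ℕ):ℝ))^(m+1-1) *
      (y + ((m+1:ℕ):ℝ) - ((m+1:ℕ):ℝ))^(m+1-(m+1)) = x * (x + c)^m := by
    simp [hc]
  have hA1 : ∑ k ∈ Icc 1 m, ((m+1).choose k : ℝ) * x * (x+k)^(k-1) * (y + c - k)^(m+1-k)
      = (x + y + c)^(m+1) - (y + c)^(m+1) - x*(x+c)^m := by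
    have := habel1
    rw [hlast] at this
    rw [hc]
    linarith [this]
  -- second sum via abel at m with y+1
  have habel2 := abel_identity m x (y+1)
  have hA2 : ∑ k ∈ Icc 1 m, ((m+1).choose k : ℝ) * ((m+1-k:ℕ):ℝ) *
        (x * (x+k)^(k-1) * (y + c - k)^(m-k))
      = c * ((x + y + c)^m - (y + c)^m) := by
    have hterm2 : ∀ k ∈ Icc 1 m,
        ((m+1).choose k : ℝ) * ((m+1-k:ℕ):ℝ) * (x * (x+k)^(k-1) * (y + c - k)^(m-k))
        = c * ((m.choose k : ℝ) * x * (x+k)^(k-1) * ((y+1) + m - k)^(m-k)) := by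
      intro k hk
      rw [Finset.mem_Icc] at hk
      have hck : ((m+1).choose k : ℝ) * ((m+1-k:ℕ):ℝ) = c * (m.choose k : ℝ) := by
        have h2 : (m+1).choose k * (m+1-k) = (m+1) * m.choose k :=
          (Nat.choose_mul_succ_eq m k).symm.trans (Nat.mul_comm _ _)
        rw [hc]
        exact_mod_cast congrArg (Nat.cast : ℕ → ℝ) h2
      have harg : y + c - k = (y+1) + (m:ℝ) - k := by rw [hc]; push_cast; ring
      rw [harg, hck]
      ring
    rw [Finset.sum_congr rfl hterm2, ← Finset.mul_sum]
    congr 1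
    have h3 : ((y+1) + (m:ℝ))^m + ∑ k ∈ Icc 1 m, ((m.choose k : ℝ)) * x * (x+k)^(k-1) *
        ((y+1) + m - k)^(m-k) = (x + (y+1) + m)^m := habel2
    have e1 : ((y+1) + (m:ℝ))^m = (y + c)^m := by rw [hc]; push_cast; ring_nf
    have e2 : (x + (y+1) + (m:ℝ))^m = (x + y + c)^m := by rw [hc]; push_cast; ring_nf
    rw [e1, e2] at h3
    linarith [h3]
  rw [hA1, hA2]
  have hpow1 : (x + y + c)^(m+1) = (x + y + c) * (x + y + c)^m := by rw [pow_succ]; ring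
  have hpow2 : (y + c)^(m+1) = (y + c) * (y + c)^m := by rw [pow_succ]; ring
  rw [hpow1, hpow2, hc]
  push_cast
  ring

lemma step3 (m : ℕ) (c t : ℝ) (hc : c = (m:ℝ)+1) (ht : t = 1/(6*c)) :
    (c+2*t)^m - (c+t)^m ≤ t * c^m := by
  have hc1 : (1:ℝ) ≤ c := by rw [hc]; linarith [(Nat.cast_nonneg m : (0:ℝ) ≤ m)]
  have hcpos : (0:ℝ) < c := by linarith
  have htpos : (0:ℝ) < t := by rw [ht]; positivity
  have hgeom := geom_sum₂_mul (c+2*t) (c+t) m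
  have hd : (c+2*t) - (c+t) = t := by ring
  rw [hd] at hgeom
  rw [← hgeom]
  have hS : (∑ i ∈ range m, (c+2*t)^i * (c+t)^(m-1-i)) ≤ (m:ℝ) * (c+2*t)^(m-1) := by
    calc (∑ i ∈ range m, (c+2*t)^i * (c+t)^(m-1-i))
        ≤ ∑ i ∈ range m, (c+2*t)^(m-1) := by
          refine Finset.sum_le_sum fun i hi => ?_
          rw [Finset.mem_range] at hi
          calc (c+2*t)^i * (c+t)^(m-1-i) ≤ (c+2*t)^i * (c+2*t)^(m-1-i) := by
                refine mul_le_mul_of_nonneg_left ?_ (by positivity)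
                exact pow_le_pow_left₀ (by linarith) (by linarith) _
            _ = (c+2*t)^(m-1) := by rw [← pow_add]; congr 1; omega
      _ = (m:ℝ) * (c+2*t)^(m-1) := by
          rw [Finset.sum_const, Finset.card_range, nsmul_eq_mul]
  have hmain : (m:ℝ) * (c+2*t)^(m-1) ≤ c^m := by
    match m with
    | 0 => simp
    | (p+1) =>
      have hcp : c = (p:ℝ) + 2 := by rw [hc]; push_cast; ring
      have hpc : (p:ℝ) ≤ c := by rw [hcp]; linarith
      set ε : ℝ := 2*t/c with hε
      have hεval : ε = 1/(3*c^2) := by rw [hε, ht]; field_simp; ring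
      have hεpos : 0 < ε := by rw [hεval]; positivity
      have hεle : ε ≤ 1/3 := by
        rw [hεval, div_le_div_iff₀ (by positivity) (by norm_num)]
        nlinarith
      have hfact : c + 2*t = c*(1+ε) := by rw [hε]; field_simp
      have hexp : (p+1) - 1 = p := by omega
      rw [hexp, hfact, mul_pow]
      have hpε : (p:ℝ)*ε ≤ 1/3 := by
        have h1 : (p:ℝ)*ε = p/(3*c^2) := by rw [hεval]; ring
        rw [h1, div_le_div_iff₀ (by positivity) (by norm_num)]
        nlinarith
      have hB : 1 - (p:ℝ)*ε ≤ (1-ε)^p := by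
        have := one_add_mul_le_pow (show (-2:ℝ) ≤ -ε by linarith) p
        calc 1 - (p:ℝ)*ε = 1 + (p:ℝ)*(-ε) := by ring
          _ ≤ (1 + -ε)^p := this
          _ = (1-ε)^p := by ring_nf
      have hprod : (1+ε)^p * (1-ε)^p ≤ 1 := by
        rw [← mul_pow]
        have h2 : (1+ε)*(1-ε) = 1 - ε^2 := by ring
        rw [h2]
        refine pow_le_one₀ (by nlinarith) (by nlinarith)
      have hA : (0:ℝ) ≤ (1+ε)^p := by positivity
      have hkey : ((p:ℝ)+1) ≤ c*(1-(p:ℝ)*ε) := by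
        have h5 : c*((p:ℝ)*ε) = p/(3*c) := by rw [hεval]; field_simp
        have h6 : (p:ℝ)/(3*c) ≤ 1 := by
          rw [div_le_one (by positivity)]; nlinarith
        nlinarith [h5, h6, hcp]
      have h7 : (1-(p:ℝ)*ε)*(1+ε)^p ≤ 1 :=
        le_trans (mul_le_mul_of_nonneg_right hB hA) (by rw [mul_comm]; exact hprod)
      have hp1 : ((p+1:ℕ):ℝ) = (p:ℝ)+1 := by push_cast; ring
      calc ((p+1:ℕ):ℝ) * (c^p*(1+ε)^p) = (((p:ℝ)+1)*(1+ε)^p) * c^p := by rw [hp1]; ring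
        _ ≤ ((c*(1-(p:ℝ)*ε))*(1+ε)^p) * c^p := by
            refine mul_le_mul_of_nonneg_right (mul_le_mul_of_nonneg_right hkey hA) ?_
            exact pow_nonneg hcpos.le p
        _ ≤ c^(p+1) := by
            rw [pow_succ']
            have h8 : (c*(1-(p:ℝ)*ε))*(1+ε)^p ≤ c := by
              calc (c*(1-(p:ℝ)*ε))*(1+ε)^p = c*((1-(p:ℝ)*ε)*(1+ε)^p) := by ring
                _ ≤ c*1 := mul_le_mul_of_nonneg_left h7 hcpos.le
                _ = c := mul_one c
            exact mul_le_mul_of_nonneg_right h8 (pow_nonneg hcpos.le p)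
  calc (∑ i ∈ range m, (c+2*t)^i * (c+t)^(m-1-i)) * t
      ≤ ((m:ℝ) * (c+2*t)^(m-1)) * t := mul_le_mul_of_nonneg_right hS (le_of_lt htpos)
    _ ≤ c^m * t := mul_le_mul_of_nonneg_right hmain (le_of_lt htpos)
    _ = t * c^m := by ring


lemma one_dim (n : ℕ) :
    ∑ k ∈ Iic n, ((n.choose k : ℝ)) * ((k:ℝ))^(k-1) * (((n-k:ℕ):ℝ))^(n-k-1)
      ≤ 4 * ((n:ℝ))^(n-1) := by
  match n with
  | 0 =>
    have : (Iic 0 : Finset ℕ) = {0} := by ext k; simp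
    rw [this, Finset.sum_singleton]
    norm_num
  | (m+1) =>
    set c : ℝ := ((m+1:ℕ):ℝ) with hcdef
    have hc : c = (m:ℝ)+1 := by rw [hcdef]; push_cast; ring
    set t : ℝ := 1/(6*c) with htdef
    have hcpos : (0:ℝ) < c := by rw [hc]; positivity
    have htpos : (0:ℝ) < t := by rw [htdef]; positivity
    have hsplit : Iic (m+1) = insert 0 (insert (m+1) (Icc 1 m)) := by
      ext k
      simp only [Finset.mem_Iic, Finset.mem_insert, Finset.mem_Icc]
      omega
    have h0notin : (0:ℕ) ∉ insert (m+1) (Icc 1 m) := by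
      simp only [Finset.mem_insert, Finset.mem_Icc]; omega
    have hmnotin : (m+1) ∉ Icc 1 m := by
      simp only [Finset.mem_Icc]; omega
    rw [hsplit, Finset.sum_insert h0notin, Finset.sum_insert hmnotin]
    have hf0 : (((m+1).choose 0 : ℕ) : ℝ) * ((0:ℕ):ℝ)^(0-1) * (((m+1-0:ℕ)):ℝ)^(m+1-0-1)
        = c^m := by
      simp [hcdef]
    have hfm : (((m+1).choose (m+1) : ℕ) : ℝ) * (((m+1:ℕ)):ℝ)^(m+1-1) *
        (((m+1-(m+1):ℕ)):ℝ)^(m+1-(m+1)-1) = c^m := by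
      simp [hcdef]
    rw [hf0, hfm]
    -- middle sum bound
    have hmid : ∑ k ∈ Icc 1 m, (((m+1).choose k : ℕ):ℝ) * ((k:ℝ))^(k-1) * (((m+1-k:ℕ)):ℝ)^(m+1-k-1)
        ≤ 2 * c^m := by
      have hstepA : ∑ k ∈ Icc 1 m, (((m+1).choose k : ℕ):ℝ) * ((k:ℝ))^(k-1) * (((m+1-k:ℕ)):ℝ)^(m+1-k-1)
          ≤ ∑ k ∈ Icc 1 m, (((m+1).choose k : ℕ):ℝ) * (t+(k:ℝ))^(k-1) * (t+c-(k:ℝ))^(m+1-k-1) := by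
        refine Finset.sum_le_sum fun k hk => ?_
        rw [Finset.mem_Icc] at hk
        have hcast : (((m+1-k:ℕ)):ℝ) = c - k := by
          rw [hcdef]; push_cast [Nat.cast_sub (by omega : k ≤ m+1)]; ring
        have hck : (0:ℝ) ≤ c - k := by
          rw [hc]
          have : (k:ℝ) ≤ (m:ℝ) := by exact_mod_cast hk.2
          linarith
        have h1 : ((k:ℝ))^(k-1) ≤ (t+(k:ℝ))^(k-1) :=
          pow_le_pow_left₀ (Nat.cast_nonneg k) (by linarith) _
        have h2 : (((m+1-k:ℕ)):ℝ)^(m+1-k-1) ≤ (t+c-(k:ℝ))^(m+1-k-1) := by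
          rw [hcast]
          exact pow_le_pow_left₀ hck (by linarith) _
        have hnn : (0:ℝ) ≤ (((m+1).choose k : ℕ):ℝ) := Nat.cast_nonneg _
        calc (((m+1).choose k : ℕ):ℝ) * ((k:ℝ))^(k-1) * (((m+1-k:ℕ)):ℝ)^(m+1-k-1)
            ≤ (((m+1).choose k : ℕ):ℝ) * (t+(k:ℝ))^(k-1) * (((m+1-k:ℕ)):ℝ)^(m+1-k-1) := by
              refine mul_le_mul_of_nonneg_right (mul_le_mul_of_nonneg_left h1 hnn) ?_
              positivity
          _ ≤ (((m+1).choose k : ℕ):ℝ) * (t+(k:ℝ))^(k-1) * (t+c-(k:ℝ))^(m+1-k-1) := by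
              refine mul_le_mul_of_nonneg_left h2 ?_
              have : (0:ℝ) ≤ (t+(k:ℝ))^(k-1) := by positivity
              positivity
      have habel := sym_abel m t t
      have hsum_eq : ∑ k ∈ Icc 1 m, ((m+1).choose k : ℝ) * t * (t+(k:ℝ))^(k-1) *
            (t * (t + ((m+1:ℕ):ℝ) - k)^(m+1-k-1))
          = (t*t) * ∑ k ∈ Icc 1 m, (((m+1).choose k : ℕ):ℝ) * (t+(k:ℝ))^(k-1) * (t+c-(k:ℝ))^(m+1-k-1) := by
        rw [Finset.mul_sum]
        refine Finset.sum_congr rfl fun k hk => ?_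
        rw [← hcdef]
        have : t + c - (k:ℝ) = t + c - (k:ℝ) := rfl
        ring
      rw [hsum_eq] at habel
      have hstep3 := step3 m c t hc htdef
      have hrhs : (t+t)*(t+t+((m+1:ℕ):ℝ))^m - t*(t+((m+1:ℕ):ℝ))^m - t*(t+((m+1:ℕ):ℝ))^m
          = 2*t*((c+2*t)^m - (c+t)^m) := by
        rw [← hcdef]
        have e1 : (t+t+c) = c+2*t := by ring
        have e2 : (t+c) = c+t := by ring
        rw [e1, e2]
        ring
      rw [hrhs] at habel
      have hSle : (t*t) * (∑ k ∈ Icc 1 m, (((m+1).choose k : ℕ):ℝ) * (t+(k:ℝ))^(k-1) * (t+c-(k:ℝ))^(m+1-k-1))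
          ≤ (t*t) * (2 * c^m) := by
        calc (t*t) * (∑ k ∈ Icc 1 m, (((m+1).choose k : ℕ):ℝ) * (t+(k:ℝ))^(k-1) * (t+c-(k:ℝ))^(m+1-k-1))
            = 2*t*((c+2*t)^m - (c+t)^m) := habel
          _ ≤ 2*t*(t*c^m) := mul_le_mul_of_nonneg_left hstep3 (by linarith)
          _ = (t*t) * (2*c^m) := by ring
      have hS2 := le_of_mul_le_mul_left hSle (by positivity : (0:ℝ) < t*t)
      exact le_trans hstepA hS2
    have hrhs_eq : 4 * (((m+1:ℕ)):ℝ)^(m+1-1) = 4 * c^m := by rw [hcdef, Nat.add_sub_cancel]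
    calc c^m + (c^m + ∑ k ∈ Icc 1 m, (((m+1).choose k : ℕ):ℝ) * ((k:ℝ))^(k-1) * (((m+1-k:ℕ)):ℝ)^(m+1-k-1))
        ≤ c^m + (c^m + 2*c^m) := by linarith [hmid]
      _ = 4 * c^m := by ring
      _ = 4 * (((m+1:ℕ)):ℝ)^(m+1-1) := hrhs_eq.symm

/-- Lemma `bauges`: for a nonzero multi-index `β ∈ ℕ^N`,
`∑_{0 ≤ γ ≤ β} (β! / (γ! (β-γ)!)) γ^{γ̃} (β-γ)^{(β-γ)̃} ≤ 4^N β^{β̃}`,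
where `α! = ∏ᵢ αᵢ!`, `α^δ = ∏ᵢ αᵢ^{δᵢ}` (with `0⁰ = 1`) and
`α̃ᵢ = max {αᵢ - 1, 0}` (truncated subtraction on `ℕ`). -/
theorem multiindex_abel_inequality (N : ℕ) (hN : 1 ≤ N)
    (β : Fin N → ℕ) (hβ : β ≠ 0) :
    ∑ γ ∈ Fintype.piFinset (fun i => Finset.Iic (β i)),
        ((∏ i, Nat.factorial (β i) : ℝ) /
            ((∏ i, Nat.factorial (γ i) : ℝ) * (∏ i, Nat.factorial (β i - γ i) : ℝ))) *
          (∏ i, ((γ i : ℝ)) ^ (γ i - 1)) *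
          (∏ i, (((β i - γ i : ℕ) : ℝ)) ^ (β i - γ i - 1)) ≤
      4 ^ N * ∏ i, ((β i : ℝ)) ^ (β i - 1) := by
  classical
  have hterm : ∀ γ ∈ Fintype.piFinset (fun i => Finset.Iic (β i)),
      ((∏ i, Nat.factorial (β i) : ℝ) /
          ((∏ i, Nat.factorial (γ i) : ℝ) * (∏ i, Nat.factorial (β i - γ i) : ℝ))) *
        (∏ i, ((γ i : ℝ)) ^ (γ i - 1)) *
        (∏ i, (((β i - γ i : ℕ) : ℝ)) ^ (β i - γ i - 1))
      = ∏ i, ((((β i).choose (γ i) : ℕ) : ℝ) * ((γ i : ℝ)) ^ (γ i - 1) *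
          ((((β i - γ i : ℕ)) : ℝ)) ^ (β i - γ i - 1)) := by
    intro γ hγ
    have hle : ∀ i, γ i ≤ β i := by
      intro i
      have := Fintype.mem_piFinset.mp hγ i
      simpa using this
    have hne : ((∏ i, Nat.factorial (γ i) : ℝ) * (∏ i, Nat.factorial (β i - γ i) : ℝ)) ≠ 0 := by
      have h1 : (0:ℝ) < ∏ i, (Nat.factorial (γ i) : ℝ) :=
        Finset.prod_pos fun i _ => by exact_mod_cast Nat.factorial_pos (γ i)
      have h2 : (0:ℝ) < ∏ i, (Nat.factorial (β i - γ i) : ℝ) :=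
        Finset.prod_pos fun i _ => by exact_mod_cast Nat.factorial_pos (β i - γ i)
      positivity
    have hdiv : ((∏ i, Nat.factorial (β i) : ℝ) /
          ((∏ i, Nat.factorial (γ i) : ℝ) * (∏ i, Nat.factorial (β i - γ i) : ℝ)))
        = ∏ i, (((β i).choose (γ i) : ℕ) : ℝ) := by
      rw [div_eq_iff hne]
      have hnat : ∀ i : Fin N, ((Nat.factorial (β i) : ℕ) : ℝ)
          = (((β i).choose (γ i) : ℕ) : ℝ) * ((Nat.factorial (γ i) : ℕ) : ℝ) *
            ((Nat.factorial (β i - γ i) : ℕ) : ℝ) := by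
        intro i
        exact_mod_cast congrArg (Nat.cast : ℕ → ℝ)
          (Nat.choose_mul_factorial_mul_factorial (hle i)).symm
      calc (∏ i, (Nat.factorial (β i) : ℝ))
          = ∏ i, ((((β i).choose (γ i) : ℕ) : ℝ) * ((Nat.factorial (γ i) : ℕ) : ℝ) *
              ((Nat.factorial (β i - γ i) : ℕ) : ℝ)) := Finset.prod_congr rfl fun i _ => hnat i
        _ = (∏ i, (((β i).choose (γ i) : ℕ) : ℝ)) *
            ((∏ i, (Nat.factorial (γ i) : ℝ)) * (∏ i, (Nat.factorial (β i - γ i) : ℝ))) := by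
            rw [Finset.prod_mul_distrib, Finset.prod_mul_distrib]
            ring
    rw [hdiv]
    rw [← Finset.prod_mul_distrib, ← Finset.prod_mul_distrib]
  rw [Finset.sum_congr rfl hterm,
    ← Finset.prod_univ_sum (fun i => Finset.Iic (β i))
      (fun i k => (((β i).choose k : ℕ) : ℝ) * ((k : ℝ)) ^ (k - 1) *
        ((((β i - k : ℕ)) : ℝ)) ^ (β i - k - 1))]
  have hrw : (4:ℝ)^N * ∏ i, ((β i : ℝ)) ^ (β i - 1) = ∏ i : Fin N, (4 * ((β i : ℝ)) ^ (β i - 1)) := by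
    rw [Finset.prod_mul_distrib, Finset.prod_const, Finset.card_univ, Fintype.card_fin]
  rw [hrw]
  refine Finset.prod_le_prod (fun i _ => ?_) (fun i _ => ?_)
  · exact Finset.sum_nonneg fun k _ => by positivity
  · exact one_dim (β i)
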